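/- Let r_H > 0. On U = {(t,r,θ,φ) ∈ ℝ⁴ : r > r_H, 0 < θ < π} consider the metric q̂ with nonzero components q̂_{00} = 1, q̂_{11} = −(1 − r_H/r)^{−1}, q̂_{22} = −r², q̂_{33} = −r² sin²θ. Define its Christoffel symbols Γ^ε_{μν} = (1/2) Σ_α (q̂⁻¹)^{εα}(∂_ν q̂_{αμ} + ∂_μ q̂_{αν} − ∂_α q̂_{μν}), its Ricci tensor R_{μν} = Σ_α ∂_α Γ^α_{μν} − ∂_ν (Σ_α Γ^α_{αμ}) + Σ_{α,β}(Γ^α_{αβ} Γ^β_{μν} − Γ^α_{νβ} Γ^β_{αμ}), and the mixed Ricci tensor R^μ_ν = Σ_λ (q̂⁻¹)^{μλ} R_{λν}. Then R^μ_ν is diagonal, R^0_0 = 0, R^2_2 = R^3_3 = −(1/2) R^1_1, and (R^1_1)² = r_H²/r⁶. -/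

import Mathlib

open scoped BigOperators

/-- Partial derivative with respect to the μ-th coordinate of ℝ⁴. -/
noncomputable def pd (μ : Fin 4) (f : (Fin 4 → ℝ) → ℝ) (x : Fin 4 → ℝ) : ℝ :=
  fderiv ℝ f x (Pi.single μ 1)

/-- Christoffel symbols `Γ^ε_{μν}` of a metric field `g`. -/
noncomputable def christoffel (g : (Fin 4 → ℝ) → Matrix (Fin 4) (Fin 4) ℝ)
    (ε μ ν : Fin 4) (x : Fin 4 → ℝ) : ℝ :=
  (1 / 2) * ∑ α, (g x)⁻¹ ε α *
    (pd ν (fun y => g y α μ) x + pd μ (fun y => g y α ν) x - pd α (fun y => g y μ ν) x)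

/-- Ricci tensor
`R_{μν} = ∂_α Γ^α_{μν} − ∂_ν Γ^α_{αμ} + Γ^α_{αβ}Γ^β_{μν} − Γ^α_{νβ}Γ^β_{αμ}`. -/
noncomputable def ricci (g : (Fin 4 → ℝ) → Matrix (Fin 4) (Fin 4) ℝ)
    (μ ν : Fin 4) (x : Fin 4 → ℝ) : ℝ :=
  (∑ α, pd α (christoffel g α μ ν) x) - pd ν (fun y => ∑ α, christoffel g α α μ y) x
    + ∑ α, ∑ β, (christoffel g α α β x * christoffel g β μ ν x
        - christoffel g α ν β x * christoffel g β α μ x)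

/-- Mixed Ricci tensor `R^μ_ν = q̂^{μλ} R_{λν}`. -/
noncomputable def ricciMixed (g : (Fin 4 → ℝ) → Matrix (Fin 4) (Fin 4) ℝ)
    (μ ν : Fin 4) (x : Fin 4 → ℝ) : ℝ :=
  ∑ lam, (g x)⁻¹ μ lam * ricci g lam ν x

/-- The ultrastatic dragged Schwarzschild metric
`ds² = dt² − (1 − r_H/r)^{−1}dr² − r²(dθ² + sin²θ dφ²)`. -/
noncomputable def qSch (rH : ℝ) (x : Fin 4 → ℝ) : Matrix (Fin 4) (Fin 4) ℝ :=
  !![1, 0, 0, 0;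
     0, -(1 - rH / x 1)⁻¹, 0, 0;
     0, 0, -(x 1) ^ 2, 0;
     0, 0, 0, -(x 1) ^ 2 * Real.sin (x 2) ^ 2]

lemma pd_congr_nhds {f g : (Fin 4 → ℝ) → ℝ} {x : Fin 4 → ℝ} (h : f =ᶠ[nhds x] g) (μ : Fin 4) :
    pd μ f x = pd μ g x := by unfold pd; rw [h.fderiv_eq]

lemma pd_const (c : ℝ) (μ : Fin 4) (x : Fin 4 → ℝ) : pd μ (fun _ => c) x = 0 := by
  simp [pd]

lemma HasFDerivAt.pd_eq {f : (Fin 4 → ℝ) → ℝ} {L : (Fin 4 → ℝ) →L[ℝ] ℝ} {x : Fin 4 → ℝ}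
    (h : HasFDerivAt f L x) (μ : Fin 4) : pd μ f x = L (Pi.single μ 1) := by
  unfold pd; rw [h.fderiv]

lemma hasFDerivAt_coord {x : Fin 4 → ℝ} {A : ℝ → ℝ} {a : ℝ} (i : Fin 4) (h : HasDerivAt A a (x i)) :
    HasFDerivAt (fun y : Fin 4 → ℝ => A (y i))
      (a • (ContinuousLinearMap.proj i : (Fin 4 → ℝ) →L[ℝ] ℝ)) x :=
  h.comp_hasFDerivAt x ((ContinuousLinearMap.proj i : (Fin 4 → ℝ) →L[ℝ] ℝ).hasFDerivAt)

lemma pd_coord {x : Fin 4 → ℝ} {A : ℝ → ℝ} {a : ℝ} (i : Fin 4) (h : HasDerivAt A a (x i))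
    (μ : Fin 4) : pd μ (fun y => A (y i)) x = a * (Pi.single μ 1 : Fin 4 → ℝ) i := by
  rw [(hasFDerivAt_coord i h).pd_eq μ]; simp

lemma pd_coord_mul {x : Fin 4 → ℝ} {A B : ℝ → ℝ} {a b : ℝ} (hA : HasDerivAt A a (x 1))
    (hB : HasDerivAt B b (x 2)) (μ : Fin 4) :
    pd μ (fun y => A (y 1) * B (y 2)) x
      = a * B (x 2) * (Pi.single μ 1 : Fin 4 → ℝ) 1 + A (x 1) * b * (Pi.single μ 1 : Fin 4 → ℝ) 2 := by
  change pd μ ((fun y : Fin 4 → ℝ => A (y 1)) * fun y => B (y 2)) x = _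
  rw [((hasFDerivAt_coord 1 hA).mul (hasFDerivAt_coord 2 hB)).pd_eq μ]
  simp; ring

lemma qSch_inv (rH : ℝ) {x : Fin 4 → ℝ} (h0 : 0 < rH) (h1 : rH < x 1)
    (hs : Real.sin (x 2) ≠ 0) :
    (qSch rH x)⁻¹ = !![1, 0, 0, 0;
     0, -(1 - rH / x 1), 0, 0;
     0, 0, -((x 1) ^ 2)⁻¹, 0;
     0, 0, 0, -((x 1) ^ 2 * Real.sin (x 2) ^ 2)⁻¹] := by
  have hr0 : (0:ℝ) < x 1 := h0.trans h1
  have hr : x 1 ≠ 0 := ne_of_gt hr0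
  have hf : 1 - rH / x 1 ≠ 0 := by
    have : rH / x 1 < 1 := (div_lt_one hr0).2 h1
    linarith
  have hd : x 1 - rH ≠ 0 := sub_ne_zero.2 (ne_of_gt h1)
  apply Matrix.inv_eq_right_inv
  ext i j
  fin_cases i <;> fin_cases j <;>
    simp [qSch, Matrix.mul_apply, Fin.sum_univ_four, Matrix.vecHead, Matrix.vecTail] <;>
    (try field_simp [hd]) <;> (try ring)

noncomputable def Gam (rH : ℝ) (y : Fin 4 → ℝ) : Fin 4 → Fin 4 → Fin 4 → ℝ :=
  ![![![0,0,0,0], ![0,0,0,0], ![0,0,0,0], ![0,0,0,0]],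
    ![![0,0,0,0], ![0, -rH / (2 * y 1 * (y 1 - rH)), 0, 0],
      ![0, 0, rH - y 1, 0], ![0, 0, 0, (rH - y 1) * Real.sin (y 2) ^ 2]],
    ![![0,0,0,0], ![0, 0, (y 1)⁻¹, 0], ![0, (y 1)⁻¹, 0, 0],
      ![0, 0, 0, -(Real.sin (y 2) * Real.cos (y 2))]],
    ![![0,0,0,0], ![0, 0, 0, (y 1)⁻¹],
      ![0, 0, 0, Real.cos (y 2) / Real.sin (y 2)],
      ![0, (y 1)⁻¹, Real.cos (y 2) / Real.sin (y 2), 0]]]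

lemma fin4_cases (i : Fin 4) : i = 0 ∨ i = 1 ∨ i = 2 ∨ i = 3 := by
  revert i; decide

set_option maxHeartbeats 2000000 in
lemma christoffel_qSch (rH : ℝ) {y : Fin 4 → ℝ} (h0 : 0 < rH) (h1 : rH < y 1)
    (hs : Real.sin (y 2) ≠ 0) (ε μ ν : Fin 4) :
    christoffel (qSch rH) ε μ ν y = Gam rH y ε μ ν := by
  have hr0 : (0:ℝ) < y 1 := h0.trans h1
  have hr : y 1 ≠ 0 := ne_of_gt hr0
  have hd : y 1 - rH ≠ 0 := sub_ne_zero.2 (ne_of_gt h1)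
  have hm0 : ∀ δ : Fin 4, pd δ (fun _ : Fin 4 → ℝ => (0:ℝ)) y = 0 := fun δ => pd_const 0 δ y
  have hm1 : ∀ δ : Fin 4, pd δ (fun _ : Fin 4 → ℝ => (1:ℝ)) y = 0 := fun δ => pd_const 1 δ y
  have hm11 : ∀ δ : Fin 4, pd δ (fun y' : Fin 4 → ℝ => -(1 - rH / y' 1)⁻¹) y
      = rH / (y 1 - rH) ^ 2 * (Pi.single δ 1 : Fin 4 → ℝ) 1 := by
    intro δ
    have hu : HasDerivAt (fun r : ℝ => 1 - rH / r) (rH / (y 1) ^ 2) (y 1) := by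
      have h := ((hasDerivAt_const (y 1) rH).div (hasDerivAt_id (y 1)) hr).const_sub 1
      refine h.congr_deriv ?_
      simp only [id_eq]; ring
    have hfne : 1 - rH / y 1 ≠ 0 := by
      have : rH / y 1 < 1 := (div_lt_one hr0).2 h1
      linarith
    have hA : HasDerivAt (fun r : ℝ => -(1 - rH / r)⁻¹) (rH / (y 1 - rH) ^ 2) (y 1) := by
      have h := (hu.inv hfne).neg
      refine h.congr_deriv ?_
      field_simp
    exact pd_coord 1 hA δ
  have hm22 : ∀ δ : Fin 4, pd δ (fun y' : Fin 4 → ℝ => -y' 1 ^ 2) y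
      = -(2 * y 1) * (Pi.single δ 1 : Fin 4 → ℝ) 1 := by
    intro δ
    have hA : HasDerivAt (fun r : ℝ => -r ^ 2) (-(2 * y 1)) (y 1) := by
      have h := (hasDerivAt_pow 2 (y 1)).neg
      refine h.congr_deriv ?_
      push_cast
      ring
    exact pd_coord 1 hA δ
  have hm33 : ∀ δ : Fin 4, pd δ (fun y' : Fin 4 → ℝ => -y' 1 ^ 2 * Real.sin (y' 2) ^ 2) y
      = -(2 * y 1) * Real.sin (y 2) ^ 2 * (Pi.single δ 1 : Fin 4 → ℝ) 1
        + -y 1 ^ 2 * (2 * Real.sin (y 2) * Real.cos (y 2)) * (Pi.single δ 1 : Fin 4 → ℝ) 2 := by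
    intro δ
    have hA : HasDerivAt (fun r : ℝ => -r ^ 2) (-(2 * y 1)) (y 1) := by
      have h := (hasDerivAt_pow 2 (y 1)).neg
      refine h.congr_deriv ?_
      push_cast
      ring
    have hB : HasDerivAt (fun t : ℝ => Real.sin t ^ 2)
        (2 * Real.sin (y 2) * Real.cos (y 2)) (y 2) := by
      have h := (Real.hasDerivAt_sin (y 2)).pow 2
      refine h.congr_deriv ?_
      push_cast
      ring
    exact pd_coord_mul hA hB δ
  rcases fin4_cases ε with rfl|rfl|rfl|rfl <;>
    rcases fin4_cases μ with rfl|rfl|rfl|rfl <;>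
    rcases fin4_cases ν with rfl|rfl|rfl|rfl <;>
  · simp only [christoffel]
    rw [qSch_inv rH h0 h1 hs]
    simp only [Fin.sum_univ_four, qSch, Gam, Matrix.cons_val', Matrix.of_apply,
      Matrix.cons_val_zero, Matrix.cons_val_one, Matrix.cons_val_two, Matrix.cons_val_three,
      Matrix.head_cons, Matrix.tail_cons, Matrix.empty_val', Matrix.cons_val_fin_one,
      Matrix.head_fin_const]
    simp only [hm0, hm1, hm11, hm22, hm33]
    try simp [Pi.single_apply]
    try field_simp
    try ring

noncomputable def Ric (rH : ℝ) (x : Fin 4 → ℝ) : Fin 4 → Fin 4 → ℝ :=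
  ![![0, 0, 0, 0],
    ![0, -rH / ((x 1) ^ 2 * (x 1 - rH)), 0, 0],
    ![0, 0, rH / (2 * x 1), 0],
    ![0, 0, 0, rH / (2 * x 1) * Real.sin (x 2) ^ 2]]

set_option maxHeartbeats 4000000 in
lemma ricci_qSch (rH : ℝ) (hrH : 0 < rH) {x : Fin 4 → ℝ} (h1 : rH < x 1) (h2 : 0 < x 2)
    (h3 : x 2 < Real.pi) (μ ν : Fin 4) :
    ricci (qSch rH) μ ν x = Ric rH x μ ν := by
  have hs : Real.sin (x 2) ≠ 0 := (Real.sin_pos_of_pos_of_lt_pi h2 h3).ne'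
  have hr0 : (0:ℝ) < x 1 := hrH.trans h1
  have hr : x 1 ≠ 0 := ne_of_gt hr0
  have hd : x 1 - rH ≠ 0 := sub_ne_zero.2 (ne_of_gt h1)
  have hmem : {y : Fin 4 → ℝ | rH < y 1 ∧ 0 < y 2 ∧ y 2 < Real.pi} ∈ nhds x := by
    refine IsOpen.mem_nhds ?_ ⟨h1, h2, h3⟩
    exact (isOpen_lt continuous_const (continuous_apply 1)).and
      ((isOpen_lt continuous_const (continuous_apply 2)).and
        (isOpen_lt (continuous_apply 2) continuous_const))
  have hGamEq : ∀ y, y ∈ {y : Fin 4 → ℝ | rH < y 1 ∧ 0 < y 2 ∧ y 2 < Real.pi} →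
      ∀ ε μ' ν' : Fin 4, christoffel (qSch rH) ε μ' ν' y = Gam rH y ε μ' ν' := by
    intro y hy ε μ' ν'
    exact christoffel_qSch rH hrH hy.1
      ((Real.sin_pos_of_pos_of_lt_pi hy.2.1 hy.2.2).ne') ε μ' ν'
  have hev : ∀ δ ε μ' ν' : Fin 4, pd δ (christoffel (qSch rH) ε μ' ν') x
      = pd δ (fun y => Gam rH y ε μ' ν') x := by
    intro δ ε μ' ν'
    exact pd_congr_nhds (Filter.eventuallyEq_of_mem hmem fun y hy => hGamEq y hy ε μ' ν') δ
  have hΓx : ∀ ε μ' ν' : Fin 4, christoffel (qSch rH) ε μ' ν' x = Gam rH x ε μ' ν' :=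
    hGamEq x ⟨h1, h2, h3⟩
  -- pointwise derivative facts
  have hz : ∀ δ : Fin 4, pd δ (fun _ : Fin 4 → ℝ => (0:ℝ)) x = 0 := fun δ => pd_const 0 δ x
  have h111d : HasDerivAt (fun r : ℝ => -rH / (2 * r * (r - rH)))
      (rH * (2 * x 1 - rH) / (2 * (x 1) ^ 2 * (x 1 - rH) ^ 2)) (x 1) := by
    have hden : HasDerivAt (fun r : ℝ => 2 * r * (r - rH))
        (2 * x 1 * 1 + (x 1 - rH) * 2) (x 1) := by
      have h := ((hasDerivAt_id (x 1)).const_mul 2).mul ((hasDerivAt_id (x 1)).sub_const rH)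
      refine h.congr_deriv ?_
      simp only [id_eq]
      ring
    have hdenne : 2 * x 1 * (x 1 - rH) ≠ 0 := by
      apply mul_ne_zero (mul_ne_zero two_ne_zero hr) hd
    have h := (hden.inv hdenne).const_mul (-rH)
    have heq : (fun r : ℝ => -rH / (2 * r * (r - rH)))
        = fun r : ℝ => -rH * (2 * r * (r - rH))⁻¹ := by
      funext r; rw [div_eq_mul_inv]
    rw [heq]
    refine h.congr_deriv ?_
    field_simp
    ring
  have hg111 : ∀ δ : Fin 4, pd δ (fun y : Fin 4 → ℝ => -rH / (2 * y 1 * (y 1 - rH))) x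
      = rH * (2 * x 1 - rH) / (2 * (x 1) ^ 2 * (x 1 - rH) ^ 2) * (Pi.single δ 1 : Fin 4 → ℝ) 1 :=
    fun δ => pd_coord 1 h111d δ
  have h122d : HasDerivAt (fun r : ℝ => rH - r) (-1) (x 1) := by
    have h := (hasDerivAt_id (x 1)).const_sub rH
    exact h
  have hg122 : ∀ δ : Fin 4, pd δ (fun y : Fin 4 → ℝ => rH - y 1) x
      = -1 * (Pi.single δ 1 : Fin 4 → ℝ) 1 := fun δ => pd_coord 1 h122d δ
  have hsin2d : HasDerivAt (fun t : ℝ => Real.sin t ^ 2)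
      (2 * Real.sin (x 2) * Real.cos (x 2)) (x 2) := by
    have h := (Real.hasDerivAt_sin (x 2)).pow 2
    refine h.congr_deriv ?_
    push_cast
    ring
  have hg133 : ∀ δ : Fin 4, pd δ (fun y : Fin 4 → ℝ => (rH - y 1) * Real.sin (y 2) ^ 2) x
      = -1 * Real.sin (x 2) ^ 2 * (Pi.single δ 1 : Fin 4 → ℝ) 1
        + (rH - x 1) * (2 * Real.sin (x 2) * Real.cos (x 2)) * (Pi.single δ 1 : Fin 4 → ℝ) 2 :=
    fun δ => pd_coord_mul h122d hsin2d δ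
  have hginv : ∀ δ : Fin 4, pd δ (fun y : Fin 4 → ℝ => (y 1)⁻¹) x
      = -((x 1) ^ 2)⁻¹ * (Pi.single δ 1 : Fin 4 → ℝ) 1 :=
    fun δ => pd_coord 1 (hasDerivAt_inv hr) δ
  have h233d : HasDerivAt (fun t : ℝ => -(Real.sin t * Real.cos t))
      (Real.sin (x 2) ^ 2 - Real.cos (x 2) ^ 2) (x 2) := by
    have h := ((Real.hasDerivAt_sin (x 2)).mul (Real.hasDerivAt_cos (x 2))).neg
    refine h.congr_deriv ?_
    ring
  have hg233 : ∀ δ : Fin 4, pd δ (fun y : Fin 4 → ℝ => -(Real.sin (y 2) * Real.cos (y 2))) x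
      = (Real.sin (x 2) ^ 2 - Real.cos (x 2) ^ 2) * (Pi.single δ 1 : Fin 4 → ℝ) 2 :=
    fun δ => pd_coord 2 h233d δ
  have h323d : HasDerivAt (fun t : ℝ => Real.cos t / Real.sin t)
      (-(Real.sin (x 2) ^ 2)⁻¹) (x 2) := by
    have h := (Real.hasDerivAt_cos (x 2)).div (Real.hasDerivAt_sin (x 2)) hs
    have hval : (-Real.sin (x 2) * Real.sin (x 2) - Real.cos (x 2) * Real.cos (x 2))
        / Real.sin (x 2) ^ 2 = -(Real.sin (x 2) ^ 2)⁻¹ := by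
      rw [div_eq_iff (pow_ne_zero 2 hs)]
      have hpy := Real.sin_sq_add_cos_sq (x 2)
      field_simp
      first
      | linarith [hpy]
      | linear_combination hpy
      | linear_combination -hpy
    rw [hval] at h
    exact h
  have hg323 : ∀ δ : Fin 4, pd δ (fun y : Fin 4 → ℝ => Real.cos (y 2) / Real.sin (y 2)) x
      = -(Real.sin (x 2) ^ 2)⁻¹ * (Pi.single δ 1 : Fin 4 → ℝ) 2 :=
    fun δ => pd_coord 2 h323d δ
  -- contracted Christoffel
  have hc0 : ∀ δ : Fin 4, pd δ (fun y => ∑ α, christoffel (qSch rH) α α 0 y) x = 0 := by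
    intro δ
    have e : (fun y => ∑ α, christoffel (qSch rH) α α 0 y) =ᶠ[nhds x] (fun _ => (0:ℝ)) := by
      refine Filter.eventuallyEq_of_mem hmem fun y hy => ?_
      simp [Fin.sum_univ_four, hGamEq y hy, Gam]
    rw [pd_congr_nhds e δ, pd_const]
  have hc3 : ∀ δ : Fin 4, pd δ (fun y => ∑ α, christoffel (qSch rH) α α 3 y) x = 0 := by
    intro δ
    have e : (fun y => ∑ α, christoffel (qSch rH) α α 3 y) =ᶠ[nhds x] (fun _ => (0:ℝ)) := by
      refine Filter.eventuallyEq_of_mem hmem fun y hy => ?_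
      simp [Fin.sum_univ_four, hGamEq y hy, Gam]
    rw [pd_congr_nhds e δ, pd_const]
  have hc1 : ∀ δ : Fin 4, pd δ (fun y => ∑ α, christoffel (qSch rH) α α 1 y) x
      = (rH * (2 * x 1 - rH) / (2 * (x 1) ^ 2 * (x 1 - rH) ^ 2) + -((x 1) ^ 2)⁻¹ + -((x 1) ^ 2)⁻¹)
        * (Pi.single δ 1 : Fin 4 → ℝ) 1 := by
    intro δ
    have e : (fun y => ∑ α, christoffel (qSch rH) α α 1 y) =ᶠ[nhds x]
        (fun y => -rH / (2 * y 1 * (y 1 - rH)) + (y 1)⁻¹ + (y 1)⁻¹) := by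
      refine Filter.eventuallyEq_of_mem hmem fun y hy => ?_
      simp [Fin.sum_univ_four, hGamEq y hy, Gam]
    rw [pd_congr_nhds e δ]
    have hA : HasDerivAt (fun r : ℝ => -rH / (2 * r * (r - rH)) + r⁻¹ + r⁻¹)
        (rH * (2 * x 1 - rH) / (2 * (x 1) ^ 2 * (x 1 - rH) ^ 2) + -((x 1) ^ 2)⁻¹ + -((x 1) ^ 2)⁻¹)
        (x 1) := (h111d.add (hasDerivAt_inv hr)).add (hasDerivAt_inv hr)
    exact pd_coord 1 hA δ
  have hc2 : ∀ δ : Fin 4, pd δ (fun y => ∑ α, christoffel (qSch rH) α α 2 y) x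
      = -(Real.sin (x 2) ^ 2)⁻¹ * (Pi.single δ 1 : Fin 4 → ℝ) 2 := by
    intro δ
    have e : (fun y => ∑ α, christoffel (qSch rH) α α 2 y) =ᶠ[nhds x]
        (fun y => Real.cos (y 2) / Real.sin (y 2)) := by
      refine Filter.eventuallyEq_of_mem hmem fun y hy => ?_
      simp [Fin.sum_univ_four, hGamEq y hy, Gam]
    rw [pd_congr_nhds e δ]
    exact pd_coord 2 h323d δ
  rcases fin4_cases μ with rfl|rfl|rfl|rfl <;>
    rcases fin4_cases ν with rfl|rfl|rfl|rfl <;>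
  · simp only [ricci]
    simp only [hc0, hc1, hc2, hc3]
    simp only [Fin.sum_univ_four]
    simp only [hev, hΓx]
    simp only [Gam, Ric, Matrix.cons_val_zero, Matrix.cons_val_one, Matrix.cons_val_two,
      Matrix.cons_val_three, Matrix.head_cons, Matrix.tail_cons]
    simp only [hz, hg111, hg122, hg133, hginv, hg233, hg323]
    try simp [Pi.single_apply]
    try field_simp
    try ring
    try linear_combination 2 * Real.sin_sq_add_cos_sq (x 2)
    try linear_combination (4 * Real.sin (x 2) ^ 2 * (x 1) ^ 4 * rH
        - 4 * Real.sin (x 2) ^ 2 * (x 1) ^ 5) * Real.sin_sq_add_cos_sq (x 2)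
    try linear_combination (2 * x 1 * rH - 2 * x 1 ^ 2) * Real.sin_sq_add_cos_sq (x 2)

/-- The mixed Ricci tensor of the dragged Schwarzschild metric is diagonal with
`R^0_0 = 0`, `R^2_2 = R^3_3 = −(1/2)R^1_1` and `(R^1_1)² = r_H²/r⁶`. -/
theorem dragged_schwarzschild_ricci (rH : ℝ) (hrH : 0 < rH) :
    ∀ x : Fin 4 → ℝ, rH < x 1 → 0 < x 2 → x 2 < Real.pi →
      (∀ μ ν : Fin 4, μ ≠ ν → ricciMixed (qSch rH) μ ν x = 0) ∧
      ricciMixed (qSch rH) 0 0 x = 0 ∧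
      ricciMixed (qSch rH) 2 2 x = -(1 / 2) * ricciMixed (qSch rH) 1 1 x ∧
      ricciMixed (qSch rH) 3 3 x = -(1 / 2) * ricciMixed (qSch rH) 1 1 x ∧
      (ricciMixed (qSch rH) 1 1 x) ^ 2 = rH ^ 2 / (x 1) ^ 6 := by
  intro x hx1 hx2 hx3
  have hs : Real.sin (x 2) ≠ 0 := (Real.sin_pos_of_pos_of_lt_pi hx2 hx3).ne'
  have hr0 : (0:ℝ) < x 1 := hrH.trans hx1
  have hr : x 1 ≠ 0 := ne_of_gt hr0
  have hd : x 1 - rH ≠ 0 := sub_ne_zero.2 (ne_of_gt hx1)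
  have hRic := ricci_qSch rH hrH hx1 hx2 hx3
  have hM : ∀ μ ν : Fin 4, ricciMixed (qSch rH) μ ν x
      = ![![(0:ℝ),0,0,0], ![0, rH/(x 1)^3,0,0],
          ![0,0,-rH/(2*(x 1)^3),0], ![0,0,0,-rH/(2*(x 1)^3)]] μ ν := by
    intro μ ν
    rcases fin4_cases μ with rfl|rfl|rfl|rfl <;>
      rcases fin4_cases ν with rfl|rfl|rfl|rfl <;>
    · simp only [ricciMixed, Fin.sum_univ_four]
      rw [qSch_inv rH hrH hx1 hs]
      simp only [hRic, Ric, Matrix.cons_val', Matrix.of_apply, Matrix.cons_val_zero,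
        Matrix.cons_val_one, Matrix.cons_val_two, Matrix.cons_val_three, Matrix.head_cons,
        Matrix.tail_cons, Matrix.empty_val', Matrix.cons_val_fin_one, Matrix.head_fin_const]
      try simp [Matrix.vecHead, Matrix.vecTail]
      try field_simp
      try ring
      try tauto
  refine ⟨?_, ?_, ?_, ?_, ?_⟩
  · intro μ ν hne
    rcases fin4_cases μ with rfl|rfl|rfl|rfl <;>
      rcases fin4_cases ν with rfl|rfl|rfl|rfl <;>
      first
      | exact absurd rfl hne
      | (rw [hM]; simp [Matrix.vecHead, Matrix.vecTail])
  · rw [hM]; simp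
  · rw [hM 2 2, hM 1 1]
    simp only [Matrix.cons_val_zero, Matrix.cons_val_one, Matrix.cons_val_two,
      Matrix.cons_val_three, Matrix.head_cons, Matrix.tail_cons]
    field_simp
  · rw [hM 3 3, hM 1 1]
    simp only [Matrix.cons_val_zero, Matrix.cons_val_one, Matrix.cons_val_two,
      Matrix.cons_val_three, Matrix.head_cons, Matrix.tail_cons]
    field_simp
  · rw [hM 1 1]
    simp only [Matrix.cons_val_zero, Matrix.cons_val_one, Matrix.cons_val_two,
      Matrix.cons_val_three, Matrix.head_cons, Matrix.tail_cons]
    rw [div_pow]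
    ring
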